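/- Let G be a connected graph on m ≥ 2 vertices and H a κ-regular graph on n vertices. Then the corona G⊙H belongs to the QE class (i.e., QEC(G⊙H) ≤ 0) if and only if G belongs to the QE class (QEC(G) ≤ 0) and min ev(A_H) ≥ −2. -/

import Mathlib

open Matrix BigOperators

/-- The join `K₁ + H` of a single vertex (labelled `none`) with `H`. -/
def joinOne {V₂ : Type*} (H : SimpleGraph V₂) : SimpleGraph (Option V₂) where
  Adj i j := (∃ a b, i = some a ∧ j = some b ∧ H.Adj a b) ∨
    (i = none ∧ j ≠ none) ∨ (i ≠ none ∧ j = none)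
  symm := by
    refine ⟨?_⟩
    rintro i j (⟨a, b, ha, hb, hab⟩ | ⟨h1, h2⟩ | ⟨h1, h2⟩)
    · exact Or.inl ⟨b, a, hb, ha, hab.symm⟩
    · exact Or.inr (Or.inr ⟨h2, h1⟩)
    · exact Or.inr (Or.inl ⟨h2, h1⟩)
  loopless := by
    refine ⟨?_⟩
    rintro i (⟨a, b, ha, hb, hab⟩ | ⟨h1, h2⟩ | ⟨h1, h2⟩)
    · rw [ha] at hb; injection hb with h; subst h; exact H.loopless.irrefl _ hab
    · exact h2 h1
    · exact h1 h2

/-- The corona graph `G ⊙ H`, on vertex set `V₁ × ({o} ∪ V₂)` with `o = none`. -/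
def corona {V₁ V₂ : Type*} (G : SimpleGraph V₁) (H : SimpleGraph V₂) :
    SimpleGraph (V₁ × Option V₂) where
  Adj p q := (p.2 = none ∧ q.2 = none ∧ G.Adj p.1 q.1) ∨
    (p.1 = q.1 ∧ (joinOne H).Adj p.2 q.2)
  symm := by
    refine ⟨?_⟩
    rintro p q (⟨h1, h2, h3⟩ | ⟨h1, h2⟩)
    · exact Or.inl ⟨h2, h1, h3.symm⟩
    · exact Or.inr ⟨h1.symm, (joinOne H).adj_symm h2⟩
  loopless := by
    refine ⟨?_⟩
    rintro p (⟨_, _, h⟩ | ⟨_, h⟩)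
    · exact G.loopless.irrefl _ h
    · exact (joinOne H).loopless.irrefl _ h

/-- The distance matrix of a graph, with real entries. -/
noncomputable def distMatrix {V : Type*} (G : SimpleGraph V) : Matrix V V ℝ :=
  fun x y => (G.dist x y : ℝ)

/-- The quadratic embedding constant of a graph:
`QEC(G) = max {⟨f, D f⟩ : ⟨f,f⟩ = 1, ⟨1,f⟩ = 0}`. -/
noncomputable def QEC {V : Type*} [Fintype V] (G : SimpleGraph V) : ℝ :=
  sSup {r : ℝ | ∃ f : V → ℝ, (∑ x, f x * f x) = 1 ∧ (∑ x, f x) = 0 ∧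
    r = f ⬝ᵥ (distMatrix G).mulVec f}

section
variable {V₁ V₂ : Type*}
variable (G : SimpleGraph V₁) (H : SimpleGraph V₂)

/-- level function -/
def ee : Option V₂ → ℕ | none => 0 | some _ => 1

lemma ee_le_one (α : Option V₂) : ee α ≤ 1 := by cases α <;> simp [ee]

/-- join distance -/
def jd [DecidableEq V₂] [DecidableRel H.Adj] : Option V₂ → Option V₂ → ℕ
  | none, none => 0
  | none, some _ => 1
  | some _, none => 1
  | some a, some b => if a = b then 0 else if H.Adj a b then 1 else 2

open scoped Classical in
/-- claimed corona distance -/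
noncomputable def cd [DecidableEq V₂] [DecidableRel H.Adj] (x y : V₁ × Option V₂) : ℕ :=
  if x.1 = y.1 then jd H x.2 y.2 else G.dist x.1 y.1 + ee x.2 + ee y.2

lemma joinOne_adj_none_some (b : V₂) : (joinOne H).Adj none (some b) :=
  Or.inr (Or.inl ⟨rfl, by simp⟩)

lemma joinOne_adj_some_none (a : V₂) : (joinOne H).Adj (some a) none :=
  Or.inr (Or.inr ⟨by simp, rfl⟩)

lemma joinOne_adj_some_some {a b : V₂} (h : H.Adj a b) : (joinOne H).Adj (some a) (some b) :=
  Or.inl ⟨a, b, rfl, rfl, h⟩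

lemma corona_adj_hub {u v : V₁} (h : G.Adj u v) :
    (corona G H).Adj (u, none) (v, none) := Or.inl ⟨rfl, rfl, h⟩

lemma corona_adj_block {u : V₁} {α β : Option V₂} (h : (joinOne H).Adj α β) :
    (corona G H).Adj (u, α) (u, β) := Or.inr ⟨rfl, h⟩

/-- graph hom from G to corona -/
def coronaHom : G →g corona G H where
  toFun u := (u, none)
  map_rel' h := Or.inl ⟨rfl, rfl, h⟩

end

section
variable {V₁ V₂ : Type*} (G : SimpleGraph V₁) (H : SimpleGraph V₂)
open SimpleGraph

variable [DecidableEq V₂] [DecidableRel H.Adj]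

/-- walk from (u,α) to (u,none) of length ee α -/
def walkToHub (u : V₁) : ∀ α : Option V₂, {p : (corona G H).Walk (u, α) (u, none) // p.length = ee α}
  | none => ⟨SimpleGraph.Walk.nil, rfl⟩
  | some a => ⟨SimpleGraph.Walk.cons (corona_adj_block G H (joinOne_adj_some_none H a))
      SimpleGraph.Walk.nil, rfl⟩

/-- existence of walks realizing the claimed distance across blocks -/
lemma exists_walk_corona (hG : G.Connected) (x y : V₁ × Option V₂) :
    ∃ p : (corona G H).Walk x y, p.length = G.dist x.1 y.1 + ee x.2 + ee y.2 := by
  obtain ⟨u, α⟩ := x; obtain ⟨v, β⟩ := y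
  obtain ⟨q, hq⟩ := hG.exists_walk_length_eq_dist u v
  obtain ⟨q', hq'⟩ : ∃ q' : (corona G H).Walk (u, none) (v, none), q'.length = G.dist u v :=
    ⟨q.map (coronaHom G H), (SimpleGraph.Walk.length_map _ _).trans hq⟩
  refine ⟨((walkToHub G H u α).1.append q').append
      ((walkToHub G H v β).1.reverse), ?_⟩
  rw [SimpleGraph.Walk.length_append, SimpleGraph.Walk.length_append,
    SimpleGraph.Walk.length_reverse, (walkToHub G H u α).2,
    (walkToHub G H v β).2, hq']
  ring

lemma corona_preconnected (hG : G.Connected) : (corona G H).Preconnected := by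
  intro x y
  obtain ⟨p, -⟩ := exists_walk_corona G H hG x y
  exact ⟨p⟩

lemma corona_dist_le (hG : G.Connected) (x y : V₁ × Option V₂) :
    (corona G H).dist x y ≤ G.dist x.1 y.1 + ee x.2 + ee y.2 := by
  obtain ⟨p, hp⟩ := exists_walk_corona G H hG x y
  exact hp ▸ SimpleGraph.dist_le p


lemma jd_none_le (β : Option V₂) : jd H none β ≤ 1 := by
  cases β <;> simp [jd]

lemma jd_self (α : Option V₂) : jd H α α = 0 := by
  cases α <;> simp [jd]

lemma jd_le_two (α β : Option V₂) : jd H α β ≤ 2 := by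
  cases α <;> cases β <;> simp [jd] <;> split_ifs <;> omega

lemma jd_le_one_of_adj {α β : Option V₂} (h : (joinOne H).Adj α β) : jd H α β ≤ 1 := by
  rcases h with ⟨a, b, ha, hb, hab⟩ | ⟨h1, h2⟩ | ⟨h1, h2⟩
  · subst ha; subst hb; simp [jd, hab]; split_ifs <;> omega
  · subst h1; cases β; · exact absurd rfl h2
    · simp [jd]
  · subst h2; cases α; · exact absurd rfl h1
    · simp [jd]

lemma jd_pos_of_ne {α β : Option V₂} (hne : α ≠ β) : 1 ≤ jd H α β := by
  cases α <;> cases β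
  · exact absurd rfl hne
  · simp [jd]
  · simp [jd]
  · rename_i a b
    have : a ≠ b := fun h => hne (by rw [h])
    simp [jd, this]
    split_ifs <;> omega

/-- Lipschitz property of the candidate distance -/
lemma cd_lip (hG : G.Connected) {x z : V₁ × Option V₂} (y : V₁ × Option V₂)
    (h : (corona G H).Adj x z) : cd G H x y ≤ cd G H z y + 1 := by
  classical
  obtain ⟨ux, α⟩ := x; obtain ⟨uz, γ⟩ := z; obtain ⟨uy, β⟩ := y
  rcases h with ⟨h1, h2, h3⟩ | ⟨h1, h2⟩
  · -- hub edge: α = none, γ = none, G.Adj ux uz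
    simp only at h1 h2 h3
    subst h1; subst h2
    have hne : ux ≠ uz := h3.ne
    have hjn : jd H none β ≤ 1 := jd_none_le H β
    have hd : G.dist ux uz = 1 := SimpleGraph.dist_eq_one_iff_adj.mpr h3
    simp only [cd]
    split_ifs with hA hB hB
    · exact absurd (hA.trans hB.symm) hne
    · omega
    · have hjd : jd H none β = ee β := by cases β <;> simp [jd, ee]
      have hdy : G.dist ux uy = 1 := by rw [← hB]; exact hd
      simp only [ee] at *
      omega
    · have htri := hG.dist_triangle (u := ux) (v := uz) (w := uy)
      simp only [ee] at *
      omega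
  · -- block edge: ux = uz, joinOne adj α γ
    simp only at h1 h2
    subst h1
    have heα := ee_le_one (V₂ := V₂) α
    simp only [cd]
    split_ifs with hA
    · by_cases hab : α = β
      · rw [hab, jd_self]; omega
      · by_cases hadj : (joinOne H).Adj α β
        · have h1' : jd H α β ≤ 1 := jd_le_one_of_adj H hadj
          omega
        · have h2' : jd H α β ≤ 2 := jd_le_two H α β
          have hgb : γ ≠ β := by rintro rfl; exact hadj h2
          have : 1 ≤ jd H γ β := jd_pos_of_ne H hgb
          omega
    · omega

/-- lower bound by induction on walks -/
lemma cd_le_length (hG : G.Connected) {x y : V₁ × Option V₂}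
    (p : (corona G H).Walk x y) : cd G H x y ≤ p.length := by
  induction p with
  | nil =>
    simp [cd, jd_self]
  | cons h q ih =>
    simp only [SimpleGraph.Walk.length_cons]
    exact le_trans (cd_lip G H hG _ h) (Nat.add_le_add_right ih 1)

/-- the corona distance formula -/
lemma corona_dist_eq (hG : G.Connected) (x y : V₁ × Option V₂) :
    (corona G H).dist x y = cd G H x y := by
  classical
  refine le_antisymm ?_ ?_
  · -- dist ≤ cd : case analysis
    obtain ⟨u, α⟩ := x; obtain ⟨v, β⟩ := y
    by_cases huv : u = v
    · subst huv
      have hcd : cd G H (u, α) (u, β) = jd H α β := if_pos rfl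
      rw [hcd]
      by_cases hab : α = β
      · subst hab; simp [jd_self, SimpleGraph.dist_self]
      · by_cases hadj : (joinOne H).Adj α β
        · have h1 : (corona G H).dist (u, α) (u, β) ≤ 1 :=
            SimpleGraph.dist_le (SimpleGraph.Walk.cons (corona_adj_block G H hadj)
              SimpleGraph.Walk.nil)
          have h2 : 1 ≤ jd H α β := jd_pos_of_ne H hab
          omega
        · -- both must be some
          match α, β with
          | none, none => exact absurd rfl hab
          | none, some b => exact absurd (joinOne_adj_none_some H b) hadj
          | some a, none => exact absurd (joinOne_adj_some_none H a) hadj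
          | some a, some b =>
            have hne : a ≠ b := fun h => hab (by rw [h])
            have hnadj : ¬ H.Adj a b := fun h => hadj (joinOne_adj_some_some H h)
            have h1 : (corona G H).dist (u, some a) (u, some b) ≤ 2 :=
              SimpleGraph.dist_le (SimpleGraph.Walk.cons
                (corona_adj_block G H (joinOne_adj_some_none H a))
                (SimpleGraph.Walk.cons (corona_adj_block G H (joinOne_adj_none_some H b))
                  SimpleGraph.Walk.nil))
            simpa [jd, hne, hnadj] using h1
    · have := corona_dist_le G H hG (u, α) (v, β)
      simpa [cd, huv] using this
  · -- cd ≤ dist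
    have hr : (corona G H).Reachable x y := corona_preconnected G H hG x y
    obtain ⟨p, hp⟩ := hr.exists_walk_length_eq_dist
    rw [← hp]
    exact cd_le_length G H hG p

end

section
variable {V₁ V₂ : Type*} (G : SimpleGraph V₁) (H : SimpleGraph V₂)
variable [DecidableEq V₂] [DecidableRel H.Adj]

/-- real level -/
noncomputable def eR : Option V₂ → ℝ := fun α => (ee α : ℝ)

/-- correction matrix -/
noncomputable def mm : Option V₂ → Option V₂ → ℝ
  | some a, some b => (if a = b then 2 else 0) + H.adjMatrix ℝ a b
  | _, _ => 0

open scoped Classical in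
lemma distMatrix_corona (hG : G.Connected) (u v : V₁) (α β : Option V₂) :
    distMatrix (corona G H) (u, α) (v, β) =
      distMatrix G u v + eR α + eR β - (if u = v then mm H α β else 0) := by
  classical
  rw [distMatrix, corona_dist_eq G H hG]
  by_cases huv : u = v
  · subst huv
    have hcd : cd G H (u, α) (u, β) = jd H α β := if_pos rfl
    rw [hcd, if_pos rfl]
    have h0 : distMatrix G u u = 0 := by simp [distMatrix, SimpleGraph.dist_self]
    rw [h0]
    cases α <;> cases β
    · simp [jd, eR, ee, mm]
    · simp [jd, eR, ee, mm]
    · simp [jd, eR, ee, mm]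
    · rename_i a b
      simp only [jd, eR, ee, mm, SimpleGraph.adjMatrix_apply]
      by_cases hab : a = b
      · subst hab
        simp [H.loopless.irrefl a]
        norm_num
      · have : ¬ a = b := hab
        by_cases hadj : H.Adj a b <;> simp [this, hadj] <;> norm_num
  · have hcd : cd G H (u, α) (v, β) = G.dist u v + ee α + ee β := if_neg huv
    rw [hcd, if_neg huv]
    push_cast [distMatrix, eR]
    ring
end

section
variable {V₁ V₂ : Type*} [Fintype V₁] [Fintype V₂] (G : SimpleGraph V₁) (H : SimpleGraph V₂)
variable [DecidableEq V₂] [DecidableRel H.Adj]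

lemma mm_none_left (β : Option V₂) : mm H none β = 0 := by cases β <;> rfl
lemma mm_some_none (a : V₂) : mm H (some a) none = 0 := rfl
lemma mm_some_some (a b : V₂) :
    mm H (some a) (some b) = (if a = b then 2 else 0) + H.adjMatrix ℝ a b := rfl

open Finset in
lemma quad_corona (hG : G.Connected) (f : V₁ × Option V₂ → ℝ)
    (hS : ∑ p, f p = 0) :
    f ⬝ᵥ (distMatrix (corona G H)).mulVec f =
      (fun u => ∑ α, f (u, α)) ⬝ᵥ (distMatrix G).mulVec (fun u => ∑ α, f (u, α))
      - ∑ u, (2 * (∑ a, f (u, some a) * f (u, some a))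
          + (fun a => f (u, some a)) ⬝ᵥ (H.adjMatrix ℝ).mulVec (fun a => f (u, some a))) := by
  classical
  have key : ∀ p q : V₁ × Option V₂, f p * (distMatrix (corona G H) p q * f q)
      = f p * f q * distMatrix G p.1 q.1 + (f p * eR p.2) * f q + f p * (f q * eR q.2)
        - f p * f q * (if p.1 = q.1 then mm H p.2 q.2 else 0) := by
    intro p q
    rw [show distMatrix (corona G H) p q = distMatrix (corona G H) (p.1, p.2) (q.1, q.2) by rfl,
      distMatrix_corona G H hG p.1 q.1 p.2 q.2]
    ring
  have e1 : f ⬝ᵥ (distMatrix (corona G H)).mulVec f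
      = ∑ p, ∑ q, (f p * f q * distMatrix G p.1 q.1 + (f p * eR p.2) * f q
          + f p * (f q * eR q.2)
          - f p * f q * (if p.1 = q.1 then mm H p.2 q.2 else 0)) := by
    simp only [dotProduct, mulVec, Finset.mul_sum]
    exact Finset.sum_congr rfl fun p _ => Finset.sum_congr rfl fun q _ => key p q
  rw [e1]
  simp only [Finset.sum_add_distrib, Finset.sum_sub_distrib]
  have h2 : ∑ p : V₁ × Option V₂, ∑ q : V₁ × Option V₂, (f p * eR p.2) * f q = 0 := by
    rw [← Finset.sum_mul_sum, hS, mul_zero]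
  have h3 : ∑ p : V₁ × Option V₂, ∑ q : V₁ × Option V₂, f p * (f q * eR q.2) = 0 := by
    rw [← Finset.sum_mul_sum, hS, zero_mul]
  have e2 : ∑ p : V₁ × Option V₂, ∑ q : V₁ × Option V₂, f p * f q * distMatrix G p.1 q.1
      = (fun u => ∑ α, f (u, α)) ⬝ᵥ (distMatrix G).mulVec (fun u => ∑ α, f (u, α)) := by
    have inner : ∀ (u : V₁) (α : Option V₂),
        (∑ q : V₁ × Option V₂, f (u, α) * f q * distMatrix G u q.1)
          = f (u, α) * ∑ v, distMatrix G u v * (∑ β, f (v, β)) := by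
      intro u α
      rw [Fintype.sum_prod_type, Finset.mul_sum]
      refine Finset.sum_congr rfl fun v _ => ?_
      rw [Finset.mul_sum, Finset.mul_sum]
      exact Finset.sum_congr rfl fun β _ => by ring
    simp only [dotProduct, mulVec]
    rw [Fintype.sum_prod_type]
    refine Finset.sum_congr rfl fun u _ => ?_
    rw [Finset.sum_congr rfl fun α (_ : α ∈ Finset.univ) => inner u α, ← Finset.sum_mul]
  have e3 : ∑ p : V₁ × Option V₂, ∑ q : V₁ × Option V₂,
        f p * f q * (if p.1 = q.1 then mm H p.2 q.2 else 0)
      = ∑ u, (2 * (∑ a, f (u, some a) * f (u, some a))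
          + (fun a => f (u, some a)) ⬝ᵥ (H.adjMatrix ℝ).mulVec (fun a => f (u, some a))) := by
    simp only [Fintype.sum_prod_type]
    refine Finset.sum_congr rfl fun u _ => ?_
    rw [Finset.sum_comm]
    have step : ∀ v, (∑ α, ∑ β, f (u, α) * f (v, β) * (if u = v then mm H α β else 0))
        = if u = v then ∑ α, ∑ β, f (u, α) * f (v, β) * mm H α β else 0 := by
      intro v
      split_ifs with h
      · simp [h]
      · simp [h]
    rw [Finset.sum_congr rfl fun v _ => step v, Finset.sum_ite_eq]
    simp only [Finset.mem_univ, if_true]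
    -- now within block u
    rw [Fintype.sum_option]
    simp only [mm_none_left, mul_zero, Finset.sum_const_zero, zero_add]
    have inner : ∀ a : V₂, (∑ β : Option V₂, f (u, some a) * f (u, β) * mm H (some a) β)
        = ∑ b, f (u, some a) * f (u, some b) * ((if a = b then 2 else 0) + H.adjMatrix ℝ a b) := by
      intro a
      rw [Fintype.sum_option]
      simp [mm_some_none, mm_some_some]
    rw [Finset.sum_congr rfl fun a _ => inner a]
    simp only [dotProduct, mulVec, Finset.mul_sum, mul_add, Finset.sum_add_distrib]
    congr 1
    · -- delta part
      have : ∀ a : V₂, (∑ b, f (u, some a) * f (u, some b) * (if a = b then 2 else 0))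
          = 2 * (f (u, some a) * f (u, some a)) := by
        intro a
        simp only [mul_ite, mul_zero]
        rw [Finset.sum_ite_eq]
        simp [Finset.mem_univ]
        ring
      rw [Finset.sum_congr rfl fun a _ => this a, ← Finset.mul_sum]
    · exact Finset.sum_congr rfl fun a _ => Finset.sum_congr rfl fun b _ => by ring
  rw [h2, h3, e2, e3]
  simp only [add_zero]
  rw [Finset.sum_add_distrib]
end

section
variable {n : Type*} [Fintype n] [DecidableEq n]

lemma rayleigh_lb {A : Matrix n n ℝ} (hA : A.IsHermitian) (μ : ℝ)
    (h : ∀ θ : ℝ, (∃ x : n → ℝ, x ≠ 0 ∧ A.mulVec x = θ • x) → μ ≤ θ) (x : n → ℝ) :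
    μ * (∑ a, x a * x a) ≤ x ⬝ᵥ A.mulVec x := by
  classical
  set B := A - μ • (1 : Matrix n n ℝ) with hBdef
  have h1 : ((μ • 1 : Matrix n n ℝ)).IsHermitian := by
    rw [Matrix.IsHermitian]; simp
  have hB : B.IsHermitian := hA.sub h1
  have hev : ∀ i, 0 ≤ hB.eigenvalues i := by
    intro i
    have hv := hB.mulVec_eigenvectorBasis i
    have hnz : (⇑(hB.eigenvectorBasis i) : n → ℝ) ≠ 0 := by
      have hne := hB.eigenvectorBasis.orthonormal.ne_zero i
      exact fun hc => hne (by simpa using hc)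
    have hBx : B.mulVec ⇑(hB.eigenvectorBasis i) =
        A.mulVec ⇑(hB.eigenvectorBasis i) - μ • ⇑(hB.eigenvectorBasis i) := by
      simp [hBdef, Matrix.sub_mulVec, Matrix.smul_mulVec, Matrix.one_mulVec]
    have hAx : A.mulVec ⇑(hB.eigenvectorBasis i) =
        (hB.eigenvalues i + μ) • ⇑(hB.eigenvectorBasis i) := by
      rw [hBx] at hv
      have := sub_eq_iff_eq_add.mp hv
      rw [this, add_smul]
    have := h (hB.eigenvalues i + μ) ⟨_, hnz, hAx⟩
    linarith
  have hpsd : B.PosSemidef := hB.posSemidef_iff_eigenvalues_nonneg.mpr (fun i => hev i)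
  have h0 : 0 ≤ x ⬝ᵥ B.mulVec x := by simpa using hpsd.dotProduct_mulVec_nonneg x
  have hexp : x ⬝ᵥ B.mulVec x = x ⬝ᵥ A.mulVec x - μ * (∑ a, x a * x a) := by
    simp only [hBdef, Matrix.sub_mulVec, Matrix.smul_mulVec, Matrix.one_mulVec,
      dotProduct, Pi.sub_apply, Pi.smul_apply, smul_eq_mul, Finset.mul_sum]
    rw [← Finset.sum_sub_distrib]
    exact Finset.sum_congr rfl fun i _ => by ring
  linarith [hexp ▸ h0]
end

section
variable {V : Type*} [Fintype V]

/-- the set whose sup is QEC -/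
def qecSet (G' : SimpleGraph V) : Set ℝ :=
  {r : ℝ | ∃ f : V → ℝ, (∑ x, f x * f x) = 1 ∧ (∑ x, f x) = 0 ∧
    r = f ⬝ᵥ (distMatrix G').mulVec f}

lemma qecSet_bddAbove (G' : SimpleGraph V) : BddAbove (qecSet G') := by
  classical
  refine ⟨∑ p, ∑ q, |distMatrix G' p q|, ?_⟩
  rintro r ⟨f, hf1, -, rfl⟩
  have habs : ∀ p, |f p| ≤ 1 := by
    intro p
    have h1 : f p * f p ≤ 1 := by
      rw [← hf1]
      exact Finset.single_le_sum (fun i _ => mul_self_nonneg (f i)) (Finset.mem_univ p)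
    exact abs_le_one_iff_mul_self_le_one.mpr h1
  have : f ⬝ᵥ (distMatrix G').mulVec f = ∑ p, ∑ q, f p * (distMatrix G' p q * f q) := by
    simp [dotProduct, mulVec, Finset.mul_sum]
  rw [this]
  refine Finset.sum_le_sum fun p _ => Finset.sum_le_sum fun q _ => ?_
  calc f p * (distMatrix G' p q * f q) ≤ |f p * (distMatrix G' p q * f q)| := le_abs_self _
    _ = |f p| * (|distMatrix G' p q| * |f q|) := by rw [abs_mul, abs_mul]
    _ ≤ 1 * (|distMatrix G' p q| * 1) := by
        apply mul_le_mul (habs p) _ (by positivity) zero_le_one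
        exact mul_le_mul_of_nonneg_left (habs q) (abs_nonneg _)
    _ = |distMatrix G' p q| := by ring

lemma sumsq_pos {f : V → ℝ} (hf : f ≠ 0) : 0 < ∑ x, f x * f x := by
  classical
  obtain ⟨x, hx⟩ := Function.ne_iff.mp hf
  exact Finset.sum_pos' (fun i _ => mul_self_nonneg (f i))
    ⟨x, Finset.mem_univ x, mul_self_pos.mpr hx⟩

lemma mem_qecSet_smul (G' : SimpleGraph V) (f : V → ℝ) (hf : f ≠ 0)
    (h0 : ∑ x, f x = 0) :
    (∑ x, f x * f x)⁻¹ * (f ⬝ᵥ (distMatrix G').mulVec f) ∈ qecSet G' := by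
  classical
  set c := ∑ x, f x * f x with hc
  have hcpos : 0 < c := sumsq_pos hf
  have hsq : (Real.sqrt c)⁻¹ * (Real.sqrt c)⁻¹ = c⁻¹ := by
    rw [← mul_inv, Real.mul_self_sqrt hcpos.le]
  refine ⟨(Real.sqrt c)⁻¹ • f, ?_, ?_, ?_⟩
  · have : ∀ x, ((Real.sqrt c)⁻¹ • f) x * ((Real.sqrt c)⁻¹ • f) x
        = c⁻¹ * (f x * f x) := by
      intro x; simp only [Pi.smul_apply, smul_eq_mul]
      rw [← hsq]; ring
    rw [Finset.sum_congr rfl fun x _ => this x, ← Finset.mul_sum, ← hc,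
      inv_mul_cancel₀ hcpos.ne']
  · simp only [Pi.smul_apply, smul_eq_mul, ← Finset.mul_sum, h0, mul_zero]
  · rw [smul_dotProduct, Matrix.mulVec_smul, dotProduct_smul, smul_eq_mul, smul_eq_mul,
      ← mul_assoc, hsq]

end

lemma QEC_eq_sSup {V : Type*} [Fintype V] (G : SimpleGraph V) :
    QEC G = sSup (qecSet G) := rfl

lemma adjMatrix_isHermitian {V : Type*} [Fintype V] (H : SimpleGraph V)
    [DecidableRel H.Adj] : (H.adjMatrix ℝ).IsHermitian := by
  rw [Matrix.IsHermitian]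
  ext i j
  simp only [Matrix.conjTranspose_apply, SimpleGraph.adjMatrix_apply, star_trivial]
  by_cases h : H.Adj i j
  · simp [h, h.symm]
  · have h2 : Not (H.Adj j i) := fun hh => h hh.symm
    simp [h, h2]


/-- The corona `G ⊙ H` belongs to the QE class (`QEC(G⊙H) ≤ 0`) if and
only if `G` belongs to the QE class (`QEC(G) ≤ 0`) and `min ev(A_H) ≥ −2`. -/
theorem corona_QE_class_iff {V₁ V₂ : Type*} [Fintype V₁] [Fintype V₂] [DecidableEq V₂]
    (G : SimpleGraph V₁) (hG : G.Connected) (hm : 2 ≤ Fintype.card V₁)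
    (H : SimpleGraph V₂) [DecidableRel H.Adj] (κ : ℕ) (hreg : H.IsRegularOfDegree κ)
    (μmin : ℝ)
    (hmin1 : ∃ x : V₂ → ℝ, x ≠ 0 ∧ (H.adjMatrix ℝ).mulVec x = μmin • x)
    (hmin2 : ∀ θ : ℝ, (∃ x : V₂ → ℝ, x ≠ 0 ∧ (H.adjMatrix ℝ).mulVec x = θ • x) → μmin ≤ θ) :
    QEC (corona G H) ≤ 0 ↔ (QEC G ≤ 0 ∧ -2 ≤ μmin) := by
  classical
  have hbddG : BddAbove (qecSet G) := qecSet_bddAbove G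
  have hbddC : BddAbove (qecSet (corona G H)) := qecSet_bddAbove (corona G H)
  constructor
  · intro hc
    rw [QEC_eq_sSup] at hc
    constructor
    · -- QEC G ≤ 0
      rw [QEC_eq_sSup]
      refine Real.sSup_le ?_ le_rfl
      rintro r ⟨g, hg1, hg0, rfl⟩
      set f : V₁ × Option V₂ → ℝ := fun p => Option.elim p.2 (g p.1) (fun _ => 0) with hfdef
      have hf1 : ∑ p, f p * f p = 1 := by
        rw [Fintype.sum_prod_type]
        simp only [hfdef, Fintype.sum_option, Option.elim]
        simpa using hg1
      have hf0 : ∑ p, f p = 0 := by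
        rw [Fintype.sum_prod_type]
        simp only [hfdef, Fintype.sum_option, Option.elim]
        simpa using hg0
      have hmem : f ⬝ᵥ (distMatrix (corona G H)).mulVec f ∈ qecSet (corona G H) :=
        ⟨f, hf1, hf0, rfl⟩
      have hle := (le_csSup hbddC hmem).trans hc
      have hQ : f ⬝ᵥ (distMatrix (corona G H)).mulVec f
          = g ⬝ᵥ (distMatrix G).mulVec g := by
        rw [quad_corona G H hG f hf0]
        have hs : (fun u => ∑ α, f (u, α)) = g := by
          funext u; simp [hfdef, Fintype.sum_option, Option.elim]
        rw [hs]
        have hz : ∀ u : V₁, (2 * (∑ a, f (u, some a) * f (u, some a))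
            + (fun a => f (u, some a)) ⬝ᵥ (H.adjMatrix ℝ).mulVec (fun a => f (u, some a))) = 0 := by
          intro u
          simp [hfdef, Option.elim, dotProduct, mulVec]
        rw [Finset.sum_congr rfl fun u _ => hz u]
        simp
      linarith [hQ ▸ hle]
    · -- -2 ≤ μmin
      obtain ⟨x, hx, hAx⟩ := hmin1
      have hV₁ : Nonempty V₁ := Fintype.card_pos_iff.mp (by omega)
      obtain ⟨u₀⟩ := hV₁
      set f : V₁ × Option V₂ → ℝ := fun p =>
        if p.1 = u₀ then Option.elim p.2 (-(∑ a, x a)) (fun a => x a) else 0 with hfdef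
      have hf0 : ∑ p, f p = 0 := by
        rw [Fintype.sum_prod_type]
        have : ∀ u, (∑ α, f (u, α)) = 0 := by
          intro u
          by_cases hu : u = u₀
          · subst hu
            simp [hfdef, Fintype.sum_option, Option.elim]
          · simp [hfdef, hu]
        rw [Finset.sum_congr rfl fun u _ => this u]
        simp
      have hfne : f ≠ 0 := by
        obtain ⟨a, ha⟩ := Function.ne_iff.mp hx
        intro hcon
        apply ha
        have := congrFun hcon (u₀, some a)
        simpa [hfdef] using this
      have hmem := mem_qecSet_smul (corona G H) f hfne hf0
      have hle := (le_csSup hbddC hmem).trans hc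
      have hcpos : 0 < ∑ p, f p * f p := sumsq_pos hfne
      have hQ : f ⬝ᵥ (distMatrix (corona G H)).mulVec f
          = -((2 + μmin) * ∑ a, x a * x a) := by
        rw [quad_corona G H hG f hf0]
        have hs : (fun u => ∑ α, f (u, α)) = (0 : V₁ → ℝ) := by
          funext u
          by_cases hu : u = u₀
          · subst hu; simp [hfdef, Fintype.sum_option, Option.elim]
          · simp [hfdef, hu]
        rw [hs]
        have hz : ∀ u : V₁, (2 * (∑ a, f (u, some a) * f (u, some a))
            + (fun a => f (u, some a)) ⬝ᵥ (H.adjMatrix ℝ).mulVec (fun a => f (u, some a)))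
            = if u = u₀ then (2 + μmin) * ∑ a, x a * x a else 0 := by
          intro u
          by_cases hu : u = u₀
          · rw [if_pos hu]
            have hfa : (fun a => f (u, some a)) = x := by
              funext a; simp [hfdef, hu]
            rw [hfa]
            have hdot : x ⬝ᵥ (H.adjMatrix ℝ).mulVec x = μmin * (x ⬝ᵥ x) := by
              rw [hAx, dotProduct_smul, smul_eq_mul]
            have hfx : ∀ a, f (u, some a) = x a := fun a => by simp [hfdef, hu]
            rw [Finset.sum_congr rfl fun a (_ : a ∈ Finset.univ) => by rw [hfx a], hdot]
            have hxx : x ⬝ᵥ x = ∑ a, x a * x a := rfl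
            rw [hxx]
            ring
          · simp [hfdef, hu, dotProduct, mulVec]
        rw [Finset.sum_congr rfl fun u _ => hz u, Finset.sum_ite_eq']
        simp
      rw [hQ] at hle
      have hxpos : 0 < ∑ a, x a * x a := sumsq_pos hx
      by_contra hcon
      push_neg at hcon
      have h1 : 0 < -((2 + μmin) * ∑ a, x a * x a) := by nlinarith
      have h2 : 0 < (∑ p, f p * f p)⁻¹ := by positivity
      nlinarith
  · rintro ⟨hQle, hμ⟩
    rw [QEC_eq_sSup]
    refine Real.sSup_le ?_ le_rfl
    rintro r ⟨f, hf1, hf0, rfl⟩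
    rw [quad_corona G H hG f hf0]
    set s : V₁ → ℝ := fun u => ∑ α, f (u, α) with hsdef
    have hs0 : ∑ u, s u = 0 := by
      rw [← hf0, Fintype.sum_prod_type]
    have hterm1 : s ⬝ᵥ (distMatrix G).mulVec s ≤ 0 := by
      by_cases hs : s = 0
      · rw [hs]; simp
      · have hmem := mem_qecSet_smul G s hs hs0
        have hQle2 : sSup (qecSet G) ≤ 0 := hQle
        have hle := (le_csSup hbddG hmem).trans hQle2
        have hcpos : 0 < ∑ u, s u * s u := sumsq_pos hs
        by_contra hcon
        push_neg at hcon
        have h2 : 0 < (∑ u, s u * s u)⁻¹ := by positivity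
        nlinarith
    have hterm2 : ∀ u : V₁, 0 ≤ 2 * (∑ a, f (u, some a) * f (u, some a))
        + (fun a => f (u, some a)) ⬝ᵥ (H.adjMatrix ℝ).mulVec (fun a => f (u, some a)) := by
      intro u
      have hray := rayleigh_lb (adjMatrix_isHermitian H) μmin hmin2 (fun a => f (u, some a))
      have hnn : 0 ≤ ∑ a, f (u, some a) * f (u, some a) :=
        Finset.sum_nonneg fun a _ => mul_self_nonneg _
      nlinarith
    have hsum : 0 ≤ ∑ u, (2 * (∑ a, f (u, some a) * f (u, some a))
        + (fun a => f (u, some a)) ⬝ᵥ (H.adjMatrix ℝ).mulVec (fun a => f (u, some a))) :=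
      Finset.sum_nonneg fun u _ => hterm2 u
    linarith
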